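/- Let m = 2k + 1 with k ≥ 2, let e ≥ 1 be an integer with gcd(e, m) = 1, let F = 𝔽_{2^m}, and let f : F → 𝔽₂ be f(x) = Tr(x^{2^e + 1}). Then the Walsh–Hadamard transform f̂(a) = Σ_{x ∈ F} (−1)^{f(x) + Tr(ax)} satisfies: f̂(a) = 0 whenever Tr(a) = 0, and f̂(a) ∈ {2^{k+1}, −2^{k+1}} whenever Tr(a) = 1. -/

import Mathlib

open Finset

noncomputable section

noncomputable instance (m : ℕ) : Fintype (GaloisField 2 m) := Fintype.ofFinite _
noncomputable instance (m : ℕ) : DecidableEq (GaloisField 2 m) := Classical.decEq _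

/-- The absolute trace map `Tr : 𝔽_{2^m} → 𝔽₂`. -/
def Ftr {m : ℕ} (x : GaloisField 2 m) : ZMod 2 :=
  Algebra.trace (ZMod 2) (GaloisField 2 m) x

namespace WalshAux

variable {m : ℕ}

lemma card_gf (hm : m ≠ 0) : Fintype.card (GaloisField 2 m) = 2 ^ m := by
  rw [← Nat.card_eq_fintype_card, GaloisField.card 2 m hm]

lemma gf_pow_card (hm : m ≠ 0) (x : GaloisField 2 m) : x ^ (2 ^ m) = x := by
  rw [← card_gf hm]; exact FiniteField.pow_card x

lemma two_eq_zero : (2 : GaloisField 2 m) = 0 := by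
  have := CharP.cast_eq_zero (GaloisField 2 m) 2
  simpa using this

lemma Ftr_add (x y : GaloisField 2 m) : Ftr (x + y) = Ftr x + Ftr y :=
  map_add (Algebra.trace (ZMod 2) (GaloisField 2 m)) x y

/-- The quadratic character `χ(x) = (-1)^{Tr x}` with values in `ℤ`. -/
def chi (x : GaloisField 2 m) : ℤ := (-1) ^ (Ftr x).val

lemma neg_one_pow_add (a b : ZMod 2) :
    (-1 : ℤ) ^ (a + b).val = ((-1 : ℤ) ^ a.val) * ((-1 : ℤ) ^ b.val) := by
  revert a b; decide

lemma chi_add (x y : GaloisField 2 m) : chi (x + y) = chi x * chi y := by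
  unfold chi
  rw [Ftr_add, neg_one_pow_add]

lemma chi_zero : chi (0 : GaloisField 2 m) = 1 := by
  unfold chi
  have : Ftr (0 : GaloisField 2 m) = 0 := map_zero (Algebra.trace (ZMod 2) (GaloisField 2 m))
  rw [this]
  rfl

/-- Frobenius as a `ZMod 2`-algebra automorphism. -/
def frobAlg (m : ℕ) : GaloisField 2 m ≃ₐ[ZMod 2] GaloisField 2 m :=
  AlgEquiv.ofRingEquiv (f := frobeniusEquiv (GaloisField 2 m) 2) (fun c => by
    show frobenius (GaloisField 2 m) 2 (algebraMap (ZMod 2) (GaloisField 2 m) c)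
        = algebraMap (ZMod 2) (GaloisField 2 m) c
    rw [frobenius_def, ← map_pow, ZMod.pow_card])

lemma Ftr_sq (x : GaloisField 2 m) : Ftr (x ^ 2) = Ftr x := by
  have h := Algebra.trace_eq_of_algEquiv (frobAlg m) x
  have hfx : frobAlg m x = x ^ 2 := rfl
  rw [hfx] at h
  exact h

lemma Ftr_pow_pow (j : ℕ) (x : GaloisField 2 m) : Ftr (x ^ (2 ^ j)) = Ftr x := by
  induction j with
  | zero => simp
  | succ n ih => rw [pow_succ, pow_mul, Ftr_sq, ih]

lemma sum_chi (hm : m ≠ 0) : ∑ x : GaloisField 2 m, chi x = 0 := by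
  obtain ⟨c, hc⟩ := Algebra.trace_surjective (ZMod 2) (GaloisField 2 m) 1
  have hcc : chi c = -1 := by
    unfold chi
    have : Ftr c = 1 := hc
    rw [this]
    rfl
  have h2 : ∑ x : GaloisField 2 m, chi (x + c) = ∑ x : GaloisField 2 m, chi x :=
    Fintype.sum_equiv (Equiv.addRight c) _ _ (fun x => rfl)
  have h3 : ∑ x : GaloisField 2 m, chi (x + c)
      = (∑ x : GaloisField 2 m, chi x) * (-1) := by
    rw [Finset.sum_mul]
    exact Finset.sum_congr rfl fun x _ => by rw [chi_add, hcc]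
  have := h2.symm.trans h3
  linarith

lemma sum_chi_mul (hm : m ≠ 0) (b : GaloisField 2 m) :
    ∑ x : GaloisField 2 m, chi (x * b) = if b = 0 then (2 : ℤ) ^ m else 0 := by
  split_ifs with hb
  · subst hb
    simp only [mul_zero, chi_zero, Finset.sum_const, Finset.card_univ, nsmul_eq_mul, mul_one]
    rw [card_gf hm]
    push_cast
    ring
  · have h : ∑ x : GaloisField 2 m, chi (x * b) = ∑ x : GaloisField 2 m, chi x :=
      Fintype.sum_equiv (Equiv.mulRight₀ b hb) _ _ (fun x => rfl)
    rw [h, sum_chi hm]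

lemma pow_pow_inj (N : ℕ) :
    Function.Injective (fun x : GaloisField 2 m => x ^ (2 ^ N : ℕ)) := by
  intro x y h
  simp only at h
  have h2 : (x + y) ^ (2 ^ N : ℕ) = 0 := by
    rw [add_pow_char_pow, h, CharTwo.add_self_eq_zero]
  have h3 : x + y = 0 := pow_eq_zero_iff (Nat.two_pow_pos N).ne' |>.mp h2
  have h4 := CharTwo.add_eq_iff_eq_add.mp h3
  rwa [zero_add] at h4

lemma fixed_mul {u : GaloisField 2 m} {d : ℕ} (hd : u ^ (2 ^ d : ℕ) = u) (q : ℕ) :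
    u ^ (2 ^ (d * q) : ℕ) = u := by
  induction q with
  | zero => simp
  | succ n ih => rw [Nat.mul_succ, pow_add, pow_mul, ih, hd]

lemma fixed_mod {u : GaloisField 2 m} {d n : ℕ} (hd : u ^ (2 ^ d : ℕ) = u)
    (hn : u ^ (2 ^ n : ℕ) = u) : u ^ (2 ^ (n % d) : ℕ) = u := by
  have hq : u ^ (2 ^ (d * (n / d)) : ℕ) = u := fixed_mul hd _
  apply pow_pow_inj (d * (n / d))
  show (u ^ (2 ^ (n % d) : ℕ)) ^ (2 ^ (d * (n / d)) : ℕ) = u ^ (2 ^ (d * (n / d)) : ℕ)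
  rw [← pow_mul, ← pow_add, Nat.mod_add_div, hn, hq]

lemma fixed_gcd {u : GaloisField 2 m} {a b : ℕ} (ha : u ^ (2 ^ a : ℕ) = u)
    (hb : u ^ (2 ^ b : ℕ) = u) : u ^ (2 ^ (Nat.gcd a b) : ℕ) = u := by
  induction a, b using Nat.gcd.induction with
  | H0 n => simpa using hb
  | H1 a b hpos ih =>
    rw [Nat.gcd_rec]
    exact ih (fixed_mod ha hb) ha

lemma kernel (hm : m ≠ 0) {r : ℕ} (hr : Nat.gcd (2 * r) m = 1) {u : GaloisField 2 m}
    (h : u ^ (2 ^ r : ℕ) + u ^ (2 ^ (m - r) : ℕ) = 0) (hrm : r ≤ m) : u = 0 ∨ u = 1 := by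
  have heq : u ^ (2 ^ r : ℕ) = u ^ (2 ^ (m - r) : ℕ) := by
    have := CharTwo.add_eq_iff_eq_add (a := u ^ (2 ^ r : ℕ)) (b := u ^ (2 ^ (m - r) : ℕ))
      (c := (0 : GaloisField 2 m)) |>.mp h
    rwa [zero_add] at this
  have h2 : u ^ (2 ^ (2 * r) : ℕ) = u := by
    have hc := congrArg (fun t : GaloisField 2 m => t ^ (2 ^ r : ℕ)) heq
    rw [← pow_mul, ← pow_mul, ← pow_add, ← pow_add, Nat.sub_add_cancel hrm] at hc
    rw [gf_pow_card hm] at hc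
    rw [show r + r = 2 * r by ring] at hc
    exact hc
  have h1 : u ^ (2 : ℕ) = u := by
    have := fixed_gcd h2 (gf_pow_card hm u)
    rwa [hr, pow_one] at this
  have hfac : u * (u - 1) = 0 := by
    rw [mul_sub, mul_one, ← sq, sq]
    rw [show u ^ (2:ℕ) = u * u from by ring] at h1
    rw [h1, sub_self]
  rcases mul_eq_zero.mp hfac with h | h
  · exact Or.inl h
  · exact Or.inr (by linear_combination h)

lemma Ftr_one (hm : m ≠ 0) (hodd : m % 2 = 1) : Ftr (1 : GaloisField 2 m) = 1 := by
  unfold Ftr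
  rw [← map_one (algebraMap (ZMod 2) (GaloisField 2 m)), Algebra.trace_algebraMap]
  rw [GaloisField.finrank 2 hm]
  rw [nsmul_eq_mul, mul_one]
  conv_lhs => rw [← Nat.mod_add_div m 2, hodd]
  push_cast
  have h2 : (2 : ZMod 2) = 0 := by decide
  rw [h2, zero_mul, add_zero]

end WalshAux

open WalshAux

/-- The Gold function `f(x) = Tr(x^{2^e+1})` with `gcd(e, m) = 1`, `m = 2k+1`, is semi-bent:
its Walsh–Hadamard transform vanishes on `T₀` and takes values `±2^{k+1}` on `T₁`
(Lemma 5, Dillon). -/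
theorem walsh_gold_function {k m e : ℕ} (hk : 2 ≤ k) (hm : m = 2 * k + 1)
    (he : 1 ≤ e) (hem : Nat.gcd e m = 1) (a : GaloisField 2 m) :
    (Ftr a = 0 →
      ∑ x : GaloisField 2 m, (-1 : ℤ) ^ (Ftr (x ^ (2 ^ e + 1)) + Ftr (a * x)).val = 0) ∧
    (Ftr a = 1 →
      ∑ x : GaloisField 2 m, (-1 : ℤ) ^ (Ftr (x ^ (2 ^ e + 1)) + Ftr (a * x)).val = 2 ^ (k + 1) ∨
      ∑ x : GaloisField 2 m, (-1 : ℤ) ^ (Ftr (x ^ (2 ^ e + 1)) + Ftr (a * x)).val = -2 ^ (k + 1)) := by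
  have hm0 : m ≠ 0 := by omega
  set r := e % m with hrdef
  have hrm : r < m := Nat.mod_lt _ (by omega)
  have hgcdr : Nat.gcd r m = 1 := by
    have h1 : Nat.gcd m e = Nat.gcd (e % m) m := Nat.gcd_rec m e
    rw [hrdef, ← h1, Nat.gcd_comm]
    exact hem
  have hr0 : r ≠ 0 := by
    intro h
    rw [h, Nat.gcd_zero_left] at hgcdr
    omega
  have hgcd2r : Nat.gcd (2 * r) m = 1 := by
    have hodd : Odd m := ⟨k, by omega⟩
    exact Nat.Coprime.mul (Nat.coprime_two_left.mpr hodd) hgcdr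
  -- replace exponent e by r
  have hxe : ∀ x : GaloisField 2 m, x ^ (2 ^ e + 1) = x ^ (2 ^ r) * x := by
    intro x
    rw [pow_add, pow_one]
    congr 1
    conv_lhs => rw [← Nat.div_add_mod e m]
    rw [pow_add (2:ℕ) (m * (e / m)) (e % m), pow_mul x,
      fixed_mul (gf_pow_card hm0 x) (e / m), ← hrdef]
  -- the summand as chi
  have key : ∀ x : GaloisField 2 m,
      (-1 : ℤ) ^ (Ftr (x ^ (2 ^ e + 1)) + Ftr (a * x)).val
        = chi (x ^ (2 ^ r : ℕ) * x + a * x) := by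
    intro x
    rw [hxe x]
    unfold chi
    rw [Ftr_add]
  set g : GaloisField 2 m → GaloisField 2 m := fun x => x ^ (2 ^ r : ℕ) * x + a * x with hg
  set S := ∑ x : GaloisField 2 m, chi (g x) with hSdef
  have hrsum : ∑ x : GaloisField 2 m, (-1 : ℤ) ^ (Ftr (x ^ (2 ^ e + 1)) + Ftr (a * x)).val = S :=
    Finset.sum_congr rfl fun x _ => key x
  -- main computation of S * S
  have hL : ∀ u : GaloisField 2 m, ∀ x : GaloisField 2 m,
      chi (g x + g (x + u))
        = chi (x * (u ^ (2 ^ (m - r) : ℕ) + u ^ (2 ^ r : ℕ))) * chi (u ^ (2 ^ r : ℕ) * u + a * u) := by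
    intro u x
    have h2 : (2 : GaloisField 2 m) = 0 := two_eq_zero
    have expand : g x + g (x + u)
        = (x ^ (2 ^ r : ℕ) * u + x * u ^ (2 ^ r : ℕ)) + (u ^ (2 ^ r : ℕ) * u + a * u) := by
      simp only [hg]
      rw [add_pow_char_pow]
      ring_nf
      linear_combination (x ^ (2 ^ r : ℕ) * x + a * x) * h2
    rw [expand, chi_add, chi_add]
    congr 1
    -- chi (x^{2^r} u) * chi (x u^{2^r}) = chi (x * (u^{2^{m-r}} + u^{2^r}))
    have hfr : Ftr (x ^ (2 ^ r : ℕ) * u) = Ftr (x * u ^ (2 ^ (m - r) : ℕ)) := by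
      rw [← Ftr_pow_pow (m - r) (x ^ (2 ^ r : ℕ) * u)]
      congr 1
      rw [mul_pow, ← pow_mul, ← pow_add, Nat.add_sub_cancel' (le_of_lt hrm), gf_pow_card hm0]
    have : chi (x ^ (2 ^ r : ℕ) * u) = chi (x * u ^ (2 ^ (m - r) : ℕ)) := by
      unfold chi; rw [hfr]
    rw [this, ← chi_add, mul_add]
  have hSsq : S * S = 2 ^ m + 2 ^ m * chi (1 + a) := by
    have c1 : S * S = ∑ x : GaloisField 2 m, ∑ y : GaloisField 2 m, chi (g x + g y) := by
      rw [hSdef, Finset.sum_mul_sum]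
      exact Finset.sum_congr rfl fun x _ => Finset.sum_congr rfl fun y _ => (chi_add _ _).symm
    have c2 : ∀ x : GaloisField 2 m, ∑ y : GaloisField 2 m, chi (g x + g y)
        = ∑ u : GaloisField 2 m, chi (g x + g (x + u)) := by
      intro x
      exact (Fintype.sum_equiv (Equiv.addLeft x) _ _ fun u => rfl).symm
    rw [c1]
    simp_rw [c2]
    rw [Finset.sum_comm]
    have c3 : ∀ u : GaloisField 2 m, ∑ x : GaloisField 2 m, chi (g x + g (x + u))
        = (if (u ^ (2 ^ (m - r) : ℕ) + u ^ (2 ^ r : ℕ)) = 0 then (2:ℤ)^m else 0)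
            * chi (u ^ (2 ^ r : ℕ) * u + a * u) := by
      intro u
      simp_rw [hL u]
      rw [← Finset.sum_mul, sum_chi_mul hm0]
    simp_rw [c3]
    -- now sum over u ∈ {0, 1}
    have vanish : ∀ u : GaloisField 2 m, u ∉ ({0, 1} : Finset (GaloisField 2 m)) →
        (if (u ^ (2 ^ (m - r) : ℕ) + u ^ (2 ^ r : ℕ)) = 0 then (2:ℤ)^m else 0)
            * chi (u ^ (2 ^ r : ℕ) * u + a * u) = 0 := by
      intro u hu
      simp only [Finset.mem_insert, Finset.mem_singleton, not_or] at hu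
      rw [if_neg, zero_mul]
      intro hzero
      rcases kernel hm0 hgcd2r (by rw [add_comm] at hzero; exact hzero) (le_of_lt hrm) with h | h
      · exact hu.1 h
      · exact hu.2 h
    have hsplit : ∑ u : GaloisField 2 m,
        (if (u ^ (2 ^ (m - r) : ℕ) + u ^ (2 ^ r : ℕ)) = 0 then (2:ℤ)^m else 0)
            * chi (u ^ (2 ^ r : ℕ) * u + a * u)
        = ∑ u ∈ ({0, 1} : Finset (GaloisField 2 m)),
            (if (u ^ (2 ^ (m - r) : ℕ) + u ^ (2 ^ r : ℕ)) = 0 then (2:ℤ)^m else 0)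
              * chi (u ^ (2 ^ r : ℕ) * u + a * u) :=
      (Finset.sum_subset (Finset.subset_univ _) (fun u _ hu => vanish u hu)).symm
    rw [hsplit, Finset.sum_pair (zero_ne_one)]
    have hr2 : (2:ℕ) ^ r ≠ 0 := (Nat.two_pow_pos r).ne'
    have hmr2 : (2:ℕ) ^ (m - r) ≠ 0 := (Nat.two_pow_pos (m - r)).ne'
    have h00 : (0 : GaloisField 2 m) ^ (2 ^ (m - r) : ℕ) + (0 : GaloisField 2 m) ^ (2 ^ r : ℕ) = 0 := by
      rw [zero_pow hmr2, zero_pow hr2, add_zero]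
    have h11 : (1 : GaloisField 2 m) ^ (2 ^ (m - r) : ℕ) + (1 : GaloisField 2 m) ^ (2 ^ r : ℕ) = 0 := by
      rw [one_pow, one_pow]; exact CharTwo.add_self_eq_zero 1
    rw [if_pos h00, if_pos h11]
    have hc0 : (0 : GaloisField 2 m) ^ (2 ^ r : ℕ) * 0 + a * 0 = 0 := by ring
    have hc1 : (1 : GaloisField 2 m) ^ (2 ^ r : ℕ) * 1 + a * 1 = 1 + a := by
      rw [one_pow, one_mul, mul_one]
    rw [hc0, hc1, chi_zero, mul_one]
  -- evaluate chi (1 + a)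
  have hFtr1 : Ftr (1 : GaloisField 2 m) = 1 := Ftr_one hm0 (by omega)
  constructor
  · intro ha0
    have hchi : chi (1 + a) = -1 := by
      unfold chi
      rw [Ftr_add, hFtr1, ha0, add_zero]
      decide
    rw [hrsum]
    have : S * S = 0 := by rw [hSsq, hchi]; ring
    exact mul_self_eq_zero.mp this
  · intro ha1
    have hchi : chi (1 + a) = 1 := by
      unfold chi
      rw [Ftr_add, hFtr1, ha1]
      decide
    have hSS : S * S = (2 ^ (k+1) : ℤ) * (2 ^ (k+1) : ℤ) := by
      rw [hSsq, hchi, mul_one, hm]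
      ring
    rw [hrsum]
    exact mul_self_eq_mul_self_iff.mp hSS

end
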